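/- arXiv:1308.3916 — 2 statements merged into one kernel-verified Lean document; each statement's English description precedes it below -/
import Mathlib

section
/- Let ᾱ = 1/4 and V₁(ξ) = (1/4)ξ₁⁴ + (1/2)(ξ₂ - ᾱ)², V₀(ξ) = (1/2)(ξ₁² + ξ₂²). Then the sublevel set Γ₁ = {ξ ∈ ℝ² : V₁(ξ) ≤ 0.015} is contained in the sublevel set Γ₀ = {ξ ∈ ℝ² : V₀(ξ) ≤ 1/6}. -/
/-- Level-set containment in the design procedure (Example, ᾱ = 1/4):
{ξ : V₁(ξ) ≤ 0.015} ⊆ {ξ : V₀(ξ) ≤ 1/6}, where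
V₁(ξ) = (1/4)ξ₁⁴ + (1/2)(ξ₂ - 1/4)² and V₀(ξ) = (1/2)(ξ₁² + ξ₂²). -/
theorem sublevel_containment :
    {ξ : ℝ × ℝ | (1 / 4) * ξ.1 ^ 4 + (1 / 2) * (ξ.2 - 1 / 4) ^ 2 ≤ 0.015} ⊆
      {ξ : ℝ × ℝ | (1 / 2) * (ξ.1 ^ 2 + ξ.2 ^ 2) ≤ 1 / 6} := by
  intro ξ h
  simp only [Set.mem_setOf_eq] at h ⊢
  norm_num at h ⊢
  nlinarith [sq_nonneg (ξ.1 ^ 2 - 0.222), sq_nonneg (ξ.2 - 0.3213), sq_nonneg ξ.1,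
    sq_nonneg (ξ.2 - 1/4), sq_nonneg (ξ.1 ^ 2 + ξ.2 - 0.55)]
end

section
/- Suppose V : X → ℝ≥0 and G : D ⇉ X satisfy V(g) ≤ γ' V(x) for all g ∈ G(x), x ∈ D, with γ' ∈ (0,1), and ⟨∇V(x), f(x)⟩ ≤ -2V(x) for all x ∈ C. Then along any solution of the hybrid system (flowing in C with ẋ = f(x), jumping from D with x⁺ ∈ G(x)), V(x(t,j)) ≤ e^{-2t} (γ')^j V(x(0,0)) for all (t,j) in the hybrid time domain of the solution. -/
open Set

/-- Exponential decay of a Lyapunov function along hybrid solutions: if V decreases at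
rate -2V along the flow ẋ = f(x) in C (via ⟨∇V(x), f(x)⟩ ≤ -2V(x)) and contracts by a
factor γ' ∈ (0,1) at jumps x⁺ ∈ G(x) from D, then along any solution
(parameterized by jump times 0 = T₀ ≤ T₁ ≤ ⋯, flowing on [T_j, T_{j+1}] in phase j),
V(x(t,j)) ≤ e^{-2t} (γ')^j V(x(0,0)). -/
theorem hybrid_exponential_decay (n : ℕ)
    (V : EuclideanSpace ℝ (Fin n) → ℝ) (f : EuclideanSpace ℝ (Fin n) → EuclideanSpace ℝ (Fin n))
    (C D : Set (EuclideanSpace ℝ (Fin n)))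
    (G : EuclideanSpace ℝ (Fin n) → Set (EuclideanSpace ℝ (Fin n)))
    (γ' : ℝ) (hγ'0 : 0 < γ') (hγ'1 : γ' < 1)
    (hVnonneg : ∀ x, 0 ≤ V x)
    (hVdiff : Differentiable ℝ V)
    (hflowdecr : ∀ x ∈ C, inner ℝ (gradient V x) (f x) ≤ (-2 : ℝ) * V x)
    (hjumpdecr : ∀ x ∈ D, ∀ g ∈ G x, V g ≤ γ' * V x)
    -- a solution of the hybrid system, parameterized by jump times T
    (T : ℕ → ℝ) (hT0 : T 0 = 0) (hTmono : Monotone T)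
    (x : ℝ → ℕ → EuclideanSpace ℝ (Fin n))
    (hflow : ∀ j : ℕ, ∀ t ∈ Icc (T j) (T (j + 1)),
      x t j ∈ C ∧ HasDerivAt (fun s => x s j) (f (x t j)) t)
    (hjump : ∀ j : ℕ, x (T (j + 1)) j ∈ D ∧ x (T (j + 1)) (j + 1) ∈ G (x (T (j + 1)) j)) :
    ∀ j : ℕ, ∀ t ∈ Icc (T j) (T (j + 1)),
      V (x t j) ≤ Real.exp (-2 * t) * γ' ^ j * V (x 0 0) := by
  -- W j t = exp(2t) V(x t j) has nonpositive derivative on the flow interval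
  have key : ∀ j : ℕ, ∀ t ∈ Icc (T j) (T (j + 1)),
      Real.exp (2 * t) * V (x t j) ≤ Real.exp (2 * T j) * V (x (T j) j) := by
    intro j t ht
    have hanti : AntitoneOn (fun s => Real.exp (2 * s) * V (x s j)) (Icc (T j) (T (j + 1))) := by
      have hW : ∀ s ∈ Icc (T j) (T (j + 1)),
          HasDerivAt (fun s => Real.exp (2 * s) * V (x s j))
            (2 * Real.exp (2 * s) * V (x s j)
              + Real.exp (2 * s) * inner ℝ (gradient V (x s j)) (f (x s j))) s := by
        intro s hs
        have hx := (hflow j s hs).2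
        have hVx : HasDerivAt (fun u => V (x u j))
            ((InnerProductSpace.toDual ℝ _ (gradient V (x s j))) (f (x s j))) s :=
          ((hVdiff (x s j)).hasGradientAt.hasFDerivAt).comp_hasDerivAt s hx
        rw [InnerProductSpace.toDual_apply_apply] at hVx
        have h2u : HasDerivAt (fun u : ℝ => 2 * u) 2 s := by
          simpa using (hasDerivAt_id s).const_mul 2
        have he : HasDerivAt (fun u => Real.exp (2 * u)) (2 * Real.exp (2 * s)) s := by
          simpa [mul_comm] using h2u.exp
        simpa [mul_comm, mul_assoc] using he.fun_mul hVx
      apply antitoneOn_of_deriv_nonpos (convex_Icc _ _)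
      · exact ContinuousOn.mono (fun s hs => (hW s hs).continuousAt.continuousWithinAt)
          (fun s hs => hs)
      · intro s hs
        exact ((hW s (interior_subset hs)).differentiableAt).differentiableWithinAt
      · intro s hs
        rw [(hW s (interior_subset hs)).deriv]
        have hC := (hflow j s (interior_subset hs)).1
        have h1 := hflowdecr _ hC
        have h2 : Real.exp (2 * s) * inner ℝ (gradient V (x s j)) (f (x s j))
            ≤ Real.exp (2 * s) * ((-2 : ℝ) * V (x s j)) :=
          mul_le_mul_of_nonneg_left h1 (Real.exp_pos _).le
        nlinarith [Real.exp_pos (2 * s)]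
    exact hanti (left_mem_Icc.mpr (ht.1.trans ht.2)) ht ht.1
  -- induction on j for the value at the start of phase j
  have main : ∀ j : ℕ, V (x (T j) j) ≤ Real.exp (-2 * T j) * γ' ^ j * V (x 0 0) := by
    intro j
    induction j with
    | zero => simp [hT0]
    | succ j ih =>
      have ht : T (j + 1) ∈ Icc (T j) (T (j + 1)) :=
        right_mem_Icc.mpr (hTmono (Nat.le_succ j))
      have h1 := key j (T (j + 1)) ht
      have h2 : Real.exp (2 * T j) * V (x (T j) j)
          ≤ Real.exp (2 * T j) * (Real.exp (-2 * T j) * γ' ^ j * V (x 0 0)) :=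
        mul_le_mul_of_nonneg_left ih (Real.exp_pos _).le
      have h3 : Real.exp (2 * T j) * (Real.exp (-2 * T j) * γ' ^ j * V (x 0 0))
          = γ' ^ j * V (x 0 0) := by
        rw [← mul_assoc, ← mul_assoc, ← Real.exp_add]
        ring_nf
        simp
      have h4 : V (x (T (j + 1)) j) ≤ Real.exp (-2 * T (j + 1)) * γ' ^ j * V (x 0 0) := by
        have := h1.trans (h2.trans_eq h3)
        have hexp := Real.exp_pos (2 * T (j + 1))
        rw [show (-2 : ℝ) * T (j + 1) = -(2 * T (j + 1)) by ring, Real.exp_neg]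
        calc V (x (T (j + 1)) j) ≤ (γ' ^ j * V (x 0 0)) / Real.exp (2 * T (j + 1)) := by
              rw [le_div_iff₀ hexp]; linarith [this]
          _ = (Real.exp (2 * T (j + 1)))⁻¹ * γ' ^ j * V (x 0 0) := by
              rw [div_eq_mul_inv]; ring
      have hj := hjumpdecr _ (hjump j).1 _ (hjump j).2
      calc V (x (T (j + 1)) (j + 1)) ≤ γ' * V (x (T (j + 1)) j) := hj
        _ ≤ γ' * (Real.exp (-2 * T (j + 1)) * γ' ^ j * V (x 0 0)) :=
            mul_le_mul_of_nonneg_left h4 hγ'0.le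
        _ = Real.exp (-2 * T (j + 1)) * γ' ^ (j + 1) * V (x 0 0) := by ring
  -- conclusion
  intro j t ht
  have h1 := key j t ht
  have h2 : Real.exp (2 * T j) * V (x (T j) j)
      ≤ Real.exp (2 * T j) * (Real.exp (-2 * T j) * γ' ^ j * V (x 0 0)) :=
    mul_le_mul_of_nonneg_left (main j) (Real.exp_pos _).le
  have h3 : Real.exp (2 * T j) * (Real.exp (-2 * T j) * γ' ^ j * V (x 0 0))
      = γ' ^ j * V (x 0 0) := by
    rw [← mul_assoc, ← mul_assoc, ← Real.exp_add]
    ring_nf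
    simp
  have h := h1.trans (h2.trans_eq h3)
  have hexp := Real.exp_pos (2 * t)
  rw [show (-2 : ℝ) * t = -(2 * t) by ring, Real.exp_neg]
  calc V (x t j) ≤ (γ' ^ j * V (x 0 0)) / Real.exp (2 * t) := by
        rw [le_div_iff₀ hexp]; linarith
    _ = (Real.exp (2 * t))⁻¹ * γ' ^ j * V (x 0 0) := by rw [div_eq_mul_inv]; ring
end
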